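/- Let X, Y be coinfinite primitive recursive subsets of ℕ with 0 ∈ X ∩ Y, and define Z₁ by: 0 ∈ Z₁ and s+1 ∉ Z₁ iff min(#(0^X)[s+1], #(0^Y)[s+1]) > min(#(0^X)[s], #(0^Y)[s]). Then R_{Z₁} is the greatest lower bound of R_X and R_Y under ≤_pr: R_{Z₁} ≤_pr R_X, R_{Z₁} ≤_pr R_Y, and for any coinfinite primitive recursive V with R_V ≤_pr R_X and R_V ≤_pr R_Y, one has R_V ≤_pr R_{Z₁}. -/

import Mathlib

/-- The equivalence relation `R_X`: `x R_X y` iff both in `X` or `x = y`. -/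
def REq (X : Set ℕ) (x y : ℕ) : Prop := (x ∈ X ∧ y ∈ X) ∨ x = y

/-- Primitive recursive reducibility between binary relations on ℕ. -/
def PrRed (R S : ℕ → ℕ → Prop) : Prop :=
  ∃ f : ℕ → ℕ, Primrec f ∧ ∀ x y, R x y ↔ S (f x) (f y)

/-- pr-bireducibility. -/
def PrEquiv (R S : ℕ → ℕ → Prop) : Prop := PrRed R S ∧ PrRed S R

/-- `X` is a primitive recursive set. -/
def PRSet (X : Set ℕ) : Prop :=
  ∃ f : ℕ → Bool, Primrec f ∧ ∀ n, n ∈ X ↔ f n = true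

/-- `#(0^X)[s]`: the number of elements of the complement of `X` that are `≤ s`. -/
noncomputable def zc (X : Set ℕ) (s : ℕ) : ℕ := {k | k ≤ s ∧ k ∉ X}.ncard

open scoped Classical in
lemma zc_eq_card (X : Set ℕ) (s : ℕ) :
    zc X s = ((Finset.range (s+1)).filter (fun k => k ∉ X)).card := by
  rw [zc, ← Set.ncard_coe_finset]
  congr 1
  ext k
  simp [Nat.lt_succ_iff]

open scoped Classical in
lemma zc_zero (X : Set ℕ) : zc X 0 = if 0 ∈ X then 0 else 1 := by
  rw [zc_eq_card]
  simp [Finset.filter_singleton]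
  split <;> simp_all

open scoped Classical in
lemma zc_succ (X : Set ℕ) (s : ℕ) :
    zc X (s+1) = zc X s + (if s+1 ∈ X then 0 else 1) := by
  rw [zc_eq_card, zc_eq_card, Finset.range_add_one, Finset.filter_insert]
  split
  · rw [Finset.card_insert_of_notMem (by simp)]
  · next h => rw [if_pos (not_not.mp h)]; omega

lemma zc_mono (X : Set ℕ) : Monotone (zc X) := by
  have h : ∀ s, zc X s ≤ zc X (s+1) := fun s => by rw [zc_succ]; omega
  exact monotone_nat_of_le_succ h

lemma zc_succ_le (X : Set ℕ) (s : ℕ) : zc X (s+1) ≤ zc X s + 1 := by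
  classical
  rw [zc_succ]; split <;> omega

lemma zc_succ_of_not_mem (X : Set ℕ) {s : ℕ} (h : s+1 ∉ X) :
    zc X (s+1) = zc X s + 1 := by
  classical
  rw [zc_succ, if_neg h]

lemma zc_succ_of_mem (X : Set ℕ) {s : ℕ} (h : s+1 ∈ X) :
    zc X (s+1) = zc X s := by
  classical
  rw [zc_succ, if_pos h]; omega

lemma zc_lt_of_not_mem (X : Set ℕ) {x y : ℕ} (hxy : x < y) (hy : y ∉ X) :
    zc X x < zc X y := by
  obtain ⟨t, rfl⟩ : ∃ t, y = t + 1 := ⟨y - 1, by omega⟩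
  have := zc_mono X (show x ≤ t by omega)
  rw [zc_succ_of_not_mem X hy]
  omega

lemma zc_pos_of_not_mem (X : Set ℕ) {x : ℕ} (hx : x ∉ X) : 1 ≤ zc X x := by
  classical
  cases x with
  | zero => rw [zc_zero, if_neg hx]
  | succ t => rw [zc_succ_of_not_mem X hx]; omega

lemma zc_inj_of_not_mem (X : Set ℕ) {x y : ℕ} (hx : x ∉ X) (hy : y ∉ X)
    (h : zc X x = zc X y) : x = y := by
  rcases lt_trichotomy x y with h' | h' | h'
  · exact absurd (zc_lt_of_not_mem X h' hy) (by omega)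
  · exact h'
  · exact absurd (zc_lt_of_not_mem X h' hx) (by omega)

/-- Computable version of `zc` from a decision function. -/
def cnt (b : ℕ → Bool) (s : ℕ) : ℕ :=
  Nat.rec (bif b 0 then 0 else 1) (fun y IH => IH + (bif b (y+1) then 0 else 1)) s

@[simp] lemma cnt_zero (b : ℕ → Bool) : cnt b 0 = bif b 0 then 0 else 1 := rfl
@[simp] lemma cnt_succ (b : ℕ → Bool) (s : ℕ) :
    cnt b (s+1) = cnt b s + (bif b (s+1) then 0 else 1) := rfl

lemma cnt_primrec {b : ℕ → Bool} (hb : Primrec b) : Primrec (cnt b) := by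
  have : Primrec₂ (fun (y IH : ℕ) => IH + (bif b (y+1) then 0 else 1)) :=
    Primrec.nat_add.comp Primrec.snd
      ((Primrec.cond (hb.comp (Primrec.succ.comp Primrec.fst))
        (Primrec.const 0) (Primrec.const 1)))
  exact (Primrec.nat_rec₁ _ this)

lemma cnt_eq_zc {X : Set ℕ} {b : ℕ → Bool} (hb : ∀ n, n ∈ X ↔ b n = true) :
    ∀ s, cnt b s = zc X s := by
  classical
  intro s
  induction s with
  | zero =>
      rw [cnt_zero, zc_zero]
      rcases Bool.eq_false_or_eq_true (b 0) with h | h <;>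
        simp [h, (hb 0).symm] <;> simp [hb 0, h]
  | succ t ih =>
      rw [cnt_succ, zc_succ, ih]
      rcases Bool.eq_false_or_eq_true (b (t+1)) with h | h <;>
        · simp only [h, cond_true, cond_false]
          congr 1
          simp [hb (t+1), h]

/-- Bounded minimum: least `k ≤ N` with `q x k = true`; `N+1`-style default otherwise. -/
def bmin (q : ℕ → ℕ → Bool) (x : ℕ) (N : ℕ) : ℕ :=
  Nat.rec (bif q x 0 then 0 else 1)
    (fun y IH => if IH ≤ y then IH else bif q x (y+1) then y+1 else y+2) N

@[simp] lemma bmin_zero (q : ℕ → ℕ → Bool) (x : ℕ) :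
    bmin q x 0 = bif q x 0 then 0 else 1 := rfl
@[simp] lemma bmin_succ (q : ℕ → ℕ → Bool) (x N : ℕ) :
    bmin q x (N+1) = if bmin q x N ≤ N then bmin q x N
      else bif q x (N+1) then N+1 else N+2 := rfl

lemma bmin_le (q : ℕ → ℕ → Bool) (x : ℕ) : ∀ N, bmin q x N ≤ N + 1 := by
  intro N
  induction N with
  | zero => rcases Bool.eq_false_or_eq_true (q x 0) with h | h <;> simp [h]
  | succ t ih =>
      rw [bmin_succ]
      split
      · omega
      · rcases Bool.eq_false_or_eq_true (q x (t+1)) with h | h <;> simp [h]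

lemma bmin_none (q : ℕ → ℕ → Bool) (x : ℕ) :
    ∀ N, (∀ k ≤ N, ¬ q x k = true) → bmin q x N = N + 1 := by
  intro N
  induction N with
  | zero =>
      intro h
      have := h 0 le_rfl
      simp [Bool.eq_false_iff.mpr this]
  | succ t ih =>
      intro h
      have h1 : bmin q x t = t + 1 := ih (fun k hk => h k (by omega))
      have h2 := h (t+1) le_rfl
      rw [bmin_succ, h1, if_neg (by omega), Bool.eq_false_iff.mpr h2]
      rfl

lemma bmin_spec (q : ℕ → ℕ → Bool) (x : ℕ) :
    ∀ N, (∃ k ≤ N, q x k = true) → bmin q x N ≤ N ∧ q x (bmin q x N) = true := by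
  intro N
  induction N with
  | zero =>
      rintro ⟨k, hk, hq⟩
      interval_cases k
      simp [hq]
  | succ t ih =>
      rintro ⟨k, hk, hq⟩
      by_cases hex : ∃ k ≤ t, q x k = true
      · obtain ⟨h1, h2⟩ := ih hex
        rw [bmin_succ, if_pos h1]
        exact ⟨by omega, h2⟩
      · push_neg at hex
        have hk' : k = t + 1 := by
          by_contra hne
          exact hex k (by omega) hq
        have h1 : bmin q x t = t + 1 := bmin_none q x t hex
        rw [bmin_succ, h1, if_neg (by omega)]
        subst hk'
        rw [hq]
        exact ⟨le_rfl, by simpa using hq⟩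

lemma bmin_primrec {q : ℕ → ℕ → Bool} {h : ℕ → ℕ} (hq : Primrec₂ q) (hh : Primrec h) :
    Primrec (fun x => bmin q x (h x)) := by
  have := Primrec.nat_rec' (f := h)
    (g := fun x => bif q x 0 then 0 else 1)
    (h := fun x (p : ℕ × ℕ) => if p.2 ≤ p.1 then p.2
      else bif q x (p.1+1) then p.1+1 else p.1+2)
    hh
    (Primrec.cond (hq.comp Primrec.id (Primrec.const 0))
      (Primrec.const 0) (Primrec.const 1))
    (Primrec.ite (Primrec.nat_le.comp (Primrec.snd.comp Primrec.snd)
        (Primrec.fst.comp Primrec.snd))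
      (Primrec.snd.comp Primrec.snd)
      (Primrec.cond (hq.comp Primrec.fst
          (Primrec.succ.comp (Primrec.fst.comp Primrec.snd)))
        (Primrec.succ.comp (Primrec.fst.comp Primrec.snd))
        (Primrec.succ.comp (Primrec.succ.comp (Primrec.fst.comp Primrec.snd)))))
  exact this.of_eq fun x => by
    induction h x with
    | zero => rfl
    | succ t ih => simp [bmin_succ, ← ih]

/-- Running maximum of `f` on `[0, s]`. -/
def mx (f : ℕ → ℕ) (s : ℕ) : ℕ :=
  Nat.rec (f 0) (fun y IH => max IH (f (y+1))) s

lemma mx_primrec {f : ℕ → ℕ} (hf : Primrec f) : Primrec (mx f) :=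
  Primrec.nat_rec₁ _ (Primrec.nat_max.comp Primrec.snd
    (hf.comp (Primrec.succ.comp Primrec.fst)))

lemma le_mx {f : ℕ → ℕ} {k s : ℕ} (h : k ≤ s) : f k ≤ mx f s := by
  induction s with
  | zero =>
      have : k = 0 := by omega
      subst this; exact le_rfl
  | succ t ih =>
      rcases Nat.lt_succ_iff_lt_or_eq.mp (Nat.lt_succ_of_le h) with h' | h'
      · exact le_trans (ih (by omega)) (le_max_left _ _)
      · subst h'; exact le_max_right _ _

/-- Existence of the `n`-th element of the complement of `B`, bounded by `N`. -/
lemma exists_nth {B : Set ℕ} (hB0 : 0 ∈ B) {n N : ℕ} (hn : 1 ≤ n)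
    (hN : n ≤ zc B N) : ∃ k ≤ N, zc B k = n ∧ k ∉ B := by
  classical
  have hex : ∃ k, n ≤ zc B k := ⟨N, hN⟩
  have hks : n ≤ zc B (Nat.find hex) := Nat.find_spec hex
  have hkN : Nat.find hex ≤ N := Nat.find_min' hex hN
  have hk0 : Nat.find hex ≠ 0 := by
    intro h
    rw [h, zc_zero, if_pos hB0] at hks
    omega
  obtain ⟨t, ht⟩ : ∃ t, Nat.find hex = t + 1 := ⟨Nat.find hex - 1, by omega⟩
  have hlt : zc B t < n := by
    have := Nat.find_min hex (show t < Nat.find hex by omega)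
    omega
  rw [ht] at hks hkN
  by_cases hmem : t + 1 ∈ B
  · rw [zc_succ_of_mem B hmem] at hks; omega
  · have := zc_succ_of_not_mem B hmem
    exact ⟨t+1, hkN, by omega, hmem⟩

/-- Generic reduction from a counting bound. -/
lemma red_of_count {A B : Set ℕ} {a b : ℕ → Bool}
    (ha : Primrec a) (hb : Primrec b)
    (haA : ∀ n, n ∈ A ↔ a n = true) (hbB : ∀ n, n ∈ B ↔ b n = true)
    (hB0 : 0 ∈ B) {h : ℕ → ℕ} (hh : Primrec h)
    (hcount : ∀ s, zc A s ≤ zc B (h s)) :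
    PrRed (REq A) (REq B) := by
  classical
  set q : ℕ → ℕ → Bool := fun x k => ((cnt b k == cnt a x) && !(b k)) with hq
  set g : ℕ → ℕ := fun x => bif a x then 0 else bmin q x (h x) with hg
  have hcb := cnt_eq_zc hbB
  have hca := cnt_eq_zc haA
  -- for x ∉ A, g x lands on the (zc A x)-th element of Bᶜ
  have key : ∀ x, x ∉ A → zc B (g x) = zc A x ∧ g x ∉ B := by
    intro x hx
    have hax : a x = false := by
      rcases Bool.eq_false_or_eq_true (a x) with h' | h'
      · exact absurd ((haA x).mpr h') hx
      · exact h' 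
    have hgx : g x = bmin q x (h x) := by rw [hg]; simp [hax]
    have h1 : 1 ≤ zc A x := zc_pos_of_not_mem A hx
    obtain ⟨k, hkN, hzk, hkB⟩ := exists_nth hB0 h1 (hcount x)
    have hqk : q x k = true := by
      rw [hq]
      simp only [Bool.and_eq_true, beq_iff_eq, Bool.not_eq_true']
      constructor
      · rw [hcb, hca, hzk]
      · rcases Bool.eq_false_or_eq_true (b k) with h' | h'
        · exact absurd ((hbB k).mpr h') hkB
        · exact h'
    obtain ⟨_, hspec⟩ := bmin_spec q x (h x) ⟨k, hkN, hqk⟩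
    rw [hq] at hspec
    simp only [Bool.and_eq_true, beq_iff_eq, Bool.not_eq_true'] at hspec
    rw [← hgx] at hspec
    refine ⟨by rw [← hcb, ← hca] at *; exact hspec.1, ?_⟩
    intro hmem
    rw [(hbB _).mp hmem] at hspec
    exact absurd hspec.2 (by simp)
  have hgA : ∀ x, x ∈ A → g x = 0 := by
    intro x hx
    rw [hg]; simp [(haA x).mp hx]
  -- primrec
  have hcnta := cnt_primrec ha
  have hcntb := cnt_primrec hb
  have h1 : Primrec₂ (fun (x k : ℕ) => cnt b k) := hcntb.comp Primrec.snd
  have h2 : Primrec₂ (fun (x k : ℕ) => cnt a x) := hcnta.comp Primrec.fst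
  have h3 : Primrec₂ (fun (x k : ℕ) => !(b k)) := (Primrec.not.comp hb).comp Primrec.snd
  have hqpr : Primrec₂ q :=
    Primrec₂.comp₂ Primrec.and (Primrec₂.comp₂ Primrec.beq h1 h2) h3
  have hgpr : Primrec g :=
    Primrec.cond ha (Primrec.const 0) (bmin_primrec hqpr hh)
  refine ⟨g, hgpr, fun x y => ?_⟩
  by_cases hxA : x ∈ A <;> by_cases hyA : y ∈ A
  · constructor
    · intro _; right; rw [hgA x hxA, hgA y hyA]
    · intro _; left; exact ⟨hxA, hyA⟩
  · obtain ⟨hzy, hyB⟩ := key y hyA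
    constructor
    · rintro (⟨_, hy⟩ | rfl)
      · exact absurd hy hyA
      · exact absurd hxA hyA
    · rintro (⟨_, hy⟩ | he)
      · exact absurd hy hyB
      · rw [hgA x hxA] at he
        exact absurd hB0 (he ▸ hyB)
  · obtain ⟨hzx, hxB⟩ := key x hxA
    constructor
    · rintro (⟨hx, _⟩ | rfl)
      · exact absurd hx hxA
      · exact absurd hyA hxA
    · rintro (⟨hx, _⟩ | he)
      · exact absurd hx hxB
      · rw [hgA y hyA] at he
        exact absurd hB0 (he ▸ hxB)
  · obtain ⟨hzx, hxB⟩ := key x hxA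
    obtain ⟨hzy, hyB⟩ := key y hyA
    constructor
    · rintro (⟨hx, _⟩ | rfl)
      · exact absurd hx hxA
      · right; rfl
    · rintro (⟨hx, _⟩ | he)
      · exact absurd hx hxB
      · right
        exact zc_inj_of_not_mem A hxA hyA (by rw [← hzx, ← hzy, he])

open scoped Classical in
lemma count_of_red {A B : Set ℕ} {f : ℕ → ℕ} (hf : Primrec f)
    (hred : ∀ x y, REq A x y ↔ REq B (f x) (f y)) :
    ∃ h : ℕ → ℕ, Primrec h ∧ ∀ s, zc A s ≤ zc B (h s) := by
  have hne : ∀ x y, x ∉ A → y ∉ A → x ≠ y →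
      f x ≠ f y ∧ ¬(f x ∈ B ∧ f y ∈ B) := by
    intro x y hx hy hxy
    have : ¬ REq A x y := by
      rintro (⟨h1, _⟩ | h1)
      · exact hx h1
      · exact hxy h1
    rw [hred] at this
    unfold REq at this
    push_neg at this
    exact ⟨this.2, fun ⟨u, v⟩ => (this.1 u) v⟩
  have hAB : ∀ v y, v ∈ A → y ∉ A → f v ≠ f y ∧ ¬(f v ∈ B ∧ f y ∈ B) := by
    intro v y hv hy
    have : ¬ REq A v y := by
      rintro (⟨_, h1⟩ | h1)
      · exact hy h1
      · exact hy (h1 ▸ hv)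
    rw [hred] at this
    unfold REq at this
    push_neg at this
    exact ⟨this.2, fun ⟨u, w⟩ => (this.1 u) w⟩
  set T : ℕ → Finset ℕ := fun s => (Finset.range (s+1)).filter (fun k => k ∉ A)
    with hT
  have hTcard : ∀ s, (T s).card = zc A s := fun s => (zc_eq_card A s).symm
  set Tb : ℕ → Finset ℕ := fun s => (T s).filter (fun k => f k ∉ B) with hTb
  have hmemT : ∀ {s k}, k ∈ T s → k ≤ s ∧ k ∉ A := by
    intro s k hk
    simp only [hT, Finset.mem_filter, Finset.mem_range, Nat.lt_succ_iff] at hk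
    exact hk
  have hTbcard : ∀ s, (T s).card ≤ (Tb s).card + 1 := by
    intro s
    have hsplit := Finset.card_filter_add_card_filter_not
      (s := T s) (p := fun k => f k ∈ B)
    have hTg1 : ((T s).filter (fun k => f k ∈ B)).card ≤ 1 := by
      rw [Finset.card_le_one]
      intro x hx y hy
      simp only [Finset.mem_filter] at hx hy
      by_contra hxy
      exact (hne x y (hmemT hx.1).2 (hmemT hy.1).2 hxy).2 ⟨hx.2, hy.2⟩
    simp only [hTb]
    omega
  have hinj : ∀ s, Set.InjOn f (Tb s) := by
    intro s x hx y hy hfxy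
    simp only [hTb, Finset.coe_filter, Set.mem_setOf_eq] at hx hy
    by_contra hxy
    exact (hne x y (hmemT hx.1).2 (hmemT hy.1).2 hxy).1 hfxy
  have himgcard : ∀ s, ((Tb s).image f).card = (Tb s).card := fun s =>
    Finset.card_image_of_injOn (hinj s)
  have himgsub : ∀ s, (Tb s).image f ⊆
      (Finset.range (mx f s + 1)).filter (fun m => m ∉ B) := by
    intro s m hm
    simp only [Finset.mem_image] at hm
    obtain ⟨k, hk, rfl⟩ := hm
    simp only [hTb, Finset.mem_filter] at hk
    simp only [Finset.mem_filter, Finset.mem_range, Nat.lt_succ_iff]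
    exact ⟨le_mx (hmemT hk.1).1, hk.2⟩
  have hbase : ∀ s, (Tb s).card ≤ zc B (mx f s) := by
    intro s
    rw [zc_eq_card, ← himgcard]
    exact Finset.card_le_card (himgsub s)
  by_cases hcase1 : ∃ v ∈ A, f v ∈ B
  · obtain ⟨v, hv, hfv⟩ := hcase1
    refine ⟨mx f, mx_primrec hf, fun s => ?_⟩
    have hTeq : Tb s = T s := by
      rw [hTb]
      apply Finset.filter_true_of_mem
      intro k hk
      exact fun hfk => (hAB v k hv (hmemT hk).2).2 ⟨hfv, hfk⟩
    calc zc A s = (T s).card := (hTcard s).symm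
      _ = (Tb s).card := by rw [hTeq]
      _ ≤ zc B (mx f s) := hbase s
  · by_cases hcase2 : ∃ v, v ∈ A
    · obtain ⟨v, hv⟩ := hcase2
      have hp : f v ∉ B := fun h => hcase1 ⟨v, hv, h⟩
      refine ⟨fun s => max (mx f s) (f v),
        Primrec.nat_max.comp (mx_primrec hf) (Primrec.const (f v)), fun s => ?_⟩
      show zc A s ≤ zc B (max (mx f s) (f v))
      have hpnotin : f v ∉ (Tb s).image f := by
        intro hmem
        simp only [Finset.mem_image] at hmem
        obtain ⟨k, hk, hfk⟩ := hmem
        simp only [hTb, Finset.mem_filter] at hk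
        exact (hAB v k hv (hmemT hk.1).2).1 hfk.symm
      have hsub : insert (f v) ((Tb s).image f) ⊆
          (Finset.range (max (mx f s) (f v) + 1)).filter (fun m => m ∉ B) := by
        intro m hm
        rcases Finset.mem_insert.mp hm with rfl | hm
        · simp only [Finset.mem_filter, Finset.mem_range, Nat.lt_succ_iff]
          exact ⟨le_max_right _ _, hp⟩
        · have := himgsub s hm
          simp only [Finset.mem_filter, Finset.mem_range, Nat.lt_succ_iff] at this ⊢
          exact ⟨le_trans this.1 (le_max_left _ _), this.2⟩
      have hcardins : (insert (f v) ((Tb s).image f)).card = (Tb s).card + 1 := by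
        rw [Finset.card_insert_of_notMem hpnotin, himgcard]
      have := Finset.card_le_card hsub
      rw [hcardins, ← zc_eq_card] at this
      have h1 := hTbcard s
      have h2 := hTcard s
      omega
    · push_neg at hcase2
      refine ⟨fun s => mx f (s+1), (mx_primrec hf).comp Primrec.succ, fun s => ?_⟩
      show zc A s ≤ zc B (mx f (s+1))
      have hnot : s + 1 ∉ A := hcase2 (s+1)
      have h1 : zc A (s+1) = zc A s + 1 := zc_succ_of_not_mem A hnot
      have h2 := hTbcard (s+1)
      have h3 := hTcard (s+1)
      have h4 := hbase (s+1)
      omega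

theorem stmt_9 (X Y Z₁ : Set ℕ) (hX : PRSet X) (hY : PRSet Y)
    (hXc : Xᶜ.Infinite) (hYc : Yᶜ.Infinite) (hX0 : 0 ∈ X) (hY0 : 0 ∈ Y)
    (hZ0 : 0 ∈ Z₁)
    (hZ : ∀ s, (s + 1 ∉ Z₁ ↔
      min (zc X (s+1)) (zc Y (s+1)) > min (zc X s) (zc Y s))) :
    PrRed (REq Z₁) (REq X) ∧ PrRed (REq Z₁) (REq Y) ∧
      ∀ V : Set ℕ, PRSet V → Vᶜ.Infinite →
        PrRed (REq V) (REq X) → PrRed (REq V) (REq Y) →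
          PrRed (REq V) (REq Z₁) := by
  classical
  obtain ⟨ax, haxpr, haX⟩ := hX
  obtain ⟨ay, haypr, haY⟩ := hY
  have hmin : ∀ s, zc Z₁ s = min (zc X s) (zc Y s) := by
    intro s
    induction s with
    | zero =>
        rw [zc_zero, zc_zero, zc_zero, if_pos hZ0, if_pos hX0, if_pos hY0]
        simp
    | succ t ih =>
        have m1 := zc_mono X (show t ≤ t + 1 by omega)
        have m2 := zc_mono Y (show t ≤ t + 1 by omega)
        have s1 := zc_succ_le X t
        have s2 := zc_succ_le Y t
        by_cases hm : t+1 ∈ Z₁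
        · have hle : ¬ (min (zc X (t+1)) (zc Y (t+1)) > min (zc X t) (zc Y t)) :=
            fun hgt => ((hZ t).mpr hgt) hm
          rw [zc_succ_of_mem Z₁ hm, ih]
          omega
        · have hgt := (hZ t).mp hm
          rw [zc_succ_of_not_mem Z₁ hm, ih]
          omega
  set az : ℕ → Bool := fun n => Nat.casesOn n true
    (fun t => decide (min (cnt ax (t+1)) (cnt ay (t+1)) ≤ min (cnt ax t) (cnt ay t)))
    with haz
  have hazmem : ∀ n, n ∈ Z₁ ↔ az n = true := by
    intro n
    cases n with
    | zero =>
        show 0 ∈ Z₁ ↔ true = true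
        simp [hZ0]
    | succ t =>
        show t+1 ∈ Z₁ ↔ decide (min (cnt ax (t+1)) (cnt ay (t+1)) ≤
          min (cnt ax t) (cnt ay t)) = true
        rw [decide_eq_true_eq, cnt_eq_zc haX, cnt_eq_zc haX, cnt_eq_zc haY,
          cnt_eq_zc haY]
        constructor
        · intro h
          by_contra h'
          exact ((hZ t).mpr (by omega)) h
        · intro h
          by_contra h'
          exact absurd ((hZ t).mp h') (by omega)
  have hazpr : Primrec az := by
    apply Primrec.nat_casesOn₁
    apply PrimrecPred.decide
    apply PrimrecRel.comp Primrec.nat_le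
    · exact Primrec.nat_min.comp
        ((cnt_primrec haxpr).comp Primrec.succ)
        ((cnt_primrec haypr).comp Primrec.succ)
    · exact Primrec.nat_min.comp (cnt_primrec haxpr) (cnt_primrec haypr)
  refine ⟨?_, ?_, ?_⟩
  · exact red_of_count hazpr haxpr hazmem haX hX0 Primrec.id
      (fun s => by rw [hmin s]; exact min_le_left _ _)
  · exact red_of_count hazpr haypr hazmem haY hY0 Primrec.id
      (fun s => by rw [hmin s]; exact min_le_right _ _)
  · intro V hV _ hVX hVY
    obtain ⟨av, havpr, havmem⟩ := hV
    obtain ⟨f1, hf1, hred1⟩ := hVX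
    obtain ⟨f2, hf2, hred2⟩ := hVY
    obtain ⟨h1, hh1, hc1⟩ := count_of_red hf1 hred1
    obtain ⟨h2, hh2, hc2⟩ := count_of_red hf2 hred2
    apply red_of_count havpr hazpr havmem hazmem hZ0
      (h := fun s => max (h1 s) (h2 s)) (Primrec.nat_max.comp hh1 hh2)
    intro s
    show zc V s ≤ zc Z₁ (max (h1 s) (h2 s))
    rw [hmin]
    have m1 := zc_mono X (le_max_left (h1 s) (h2 s))
    have m2 := zc_mono Y (le_max_right (h1 s) (h2 s))
    have c1 := hc1 s
    have c2 := hc2 s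
    omega
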